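/- Let Q, M₁, M₃, M₄ be n×n real symmetric positive semidefinite matrices, let N₁, N₂ be n×n real symmetric positive definite matrices, and let S₂ be an n×n real symmetric matrix. Suppose (S₂ − Q)·M₄ = 0, the stationarity condition (Q+N₂)⁻¹ − (Q+N₁)⁻¹ − M₁ − M₃ + M₄ = 0 holds, and S₂ − Q is positive definite. Then N₂ ⪯ N₁. -/

import Mathlib

open Matrix

lemma inv_anti {n : ℕ} {A B : Matrix (Fin n) (Fin n) ℝ}
    (hA : A.PosDef) (hB : B.PosDef) (h : (B - A).PosSemidef) :
    (A⁻¹ - B⁻¹).PosSemidef := by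
  haveI := hA.isUnit.invertible
  haveI := hB.isUnit.invertible
  haveI := hA.inv.isUnit.invertible
  have h1 : (fromBlocks B (1 : Matrix (Fin n) (Fin n) ℝ)
      (1 : Matrix (Fin n) (Fin n) ℝ)ᴴ A⁻¹).PosSemidef := by
    rw [PosDef.fromBlocks₂₂ _ _ hA.inv]
    simpa [Matrix.inv_inv_of_invertible] using h
  have h2 := (PosDef.fromBlocks₁₁ (1 : Matrix (Fin n) (Fin n) ℝ) A⁻¹ hB).mp h1
  simpa using h2

/-- first case in the proof of Lemma 4 of the paper. If
`(S₂ − Q)·M₄ = 0`, the stationarity condition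
`(Q+N₂)⁻¹ − (Q+N₁)⁻¹ − M₁ − M₃ + M₄ = 0` holds, and `S₂ − Q ≻ 0`, then `N₂ ⪯ N₁`. -/
theorem stmt_7 {n : ℕ} (Q M₁ M₃ M₄ N₁ N₂ S₂ : Matrix (Fin n) (Fin n) ℝ)
    (hQ : Q.PosSemidef)
    (hM₁ : M₁.PosSemidef) (hM₃ : M₃.PosSemidef) (hM₄ : M₄.PosSemidef)
    (hN₁ : N₁.PosDef) (hN₂ : N₂.PosDef) (hS₂ : S₂.IsHermitian)
    (hcs : (S₂ - Q) * M₄ = 0)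
    (hstat : (Q + N₂)⁻¹ - (Q + N₁)⁻¹ - M₁ - M₃ + M₄ = 0)
    (hstrict : (S₂ - Q).PosDef) :
    (N₁ - N₂).PosSemidef := by
  haveI := hstrict.isUnit.invertible
  have hM40 : M₄ = 0 := by
    have := congrArg (fun X => (S₂ - Q)⁻¹ * X) hcs
    simpa [← Matrix.mul_assoc, Matrix.inv_mul_of_invertible] using this
  subst hM40
  have hP1 : (Q + N₁).PosDef := Matrix.PosDef.posSemidef_add hQ hN₁
  have hP2 : (Q + N₂).PosDef := Matrix.PosDef.posSemidef_add hQ hN₂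
  haveI := hP1.isUnit.invertible
  haveI := hP2.isUnit.invertible
  have hdiff : ((Q + N₂)⁻¹ - (Q + N₁)⁻¹).PosSemidef := by
    have : (Q + N₂)⁻¹ - (Q + N₁)⁻¹ = M₁ + M₃ := by
      have := hstat
      linear_combination (norm := abel_nf) this
    rw [this]; exact hM₁.add hM₃
  have := inv_anti hP1.inv hP2.inv (by simpa using hdiff)
  rw [Matrix.inv_inv_of_invertible, Matrix.inv_inv_of_invertible] at this
  have heq : (Q + N₁) - (Q + N₂) = N₁ - N₂ := by abel
  rwa [heq] at this
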